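/- The function φ(λ) := (2 − log(27/16))·λ + (log(27/16) − 1/3)·λ² − (5/3)·λ³ + λ²·log λ + (1 − λ)·log(1 − λ) satisfies φ(λ) > 0 for every λ ∈ (0, 1/2], and φ(λ) → 0 as λ → 0⁺. -/

import Mathlib

open scoped BigOperators
open MeasureTheory

/-- A spin configuration on `ℤ²` (intended values `±1`). -/
abbrev SpinConfig := ℤ × ℤ → ℝ

/-- `σ` takes values in `{−1,+1}`. -/
def IsSpin (σ : SpinConfig) : Prop := ∀ x, σ x = 1 ∨ σ x = -1

/-- `σ` is `L`-periodic in both coordinate directions. -/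
def IsPeriodic (L : ℕ) (σ : SpinConfig) : Prop :=
  ∀ x : ℤ × ℤ, σ (x.1 + L, x.2) = σ x ∧ σ (x.1, x.2 + L) = σ x

/-- The box `Λ_L = {0,…,L−1}²`. -/
noncomputable def box (L : ℕ) : Finset (ℤ × ℤ) :=
  Finset.Icc (0:ℤ) ((L:ℤ) - 1) ×ˢ Finset.Icc (0:ℤ) ((L:ℤ) - 1)

/-- The dipolar kernel `1/|v|³`, interpreted as `0` at `v = 0`. -/
noncomputable def dipKer (v : ℤ × ℤ) : ℝ :=
  if v = 0 then 0 else 1 / (((v.1 : ℝ)^2 + (v.2 : ℝ)^2) ^ ((3:ℝ)/2))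

/-- The torus Hamiltonian `H_L(σ)`. -/
noncomputable def torusH (J : ℝ) (L : ℕ) (σ : SpinConfig) : ℝ :=
  -(J/2) * ∑ x ∈ box L, ∑ y ∈ box L,
      (if (x.1 - y.1)^2 + (x.2 - y.2)^2 = 1 then σ x * σ y - 1 else 0)
  + (1/2) * ∑ x ∈ box L, ∑ y ∈ box L,
      ∑' m : ℤ × ℤ, (σ x * σ y - 1) * dipKer (x.1 - y.1 + L * m.1, x.2 - y.2 + L * m.2)

/-- The energy per site `E(σ) = H_L(σ)/L²` of an `L`-periodic configuration. -/
noncomputable def energyPerSite (J : ℝ) (L : ℕ) (σ : SpinConfig) : ℝ :=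
  torusH J L σ / (L : ℝ)^2

/-- The periodic striped configuration `σ_s(h)(x) = (−1)^⌊x₂/h⌋`. -/
noncomputable def stripeConfig (h : ℕ) : SpinConfig :=
  fun x => (-1 : ℝ) ^ (Int.fdiv x.2 (h:ℤ))

/-- `E_s(h)`, the energy per site of the striped configuration of width `h`. -/
noncomputable def stripeEnergy (J : ℝ) (h : ℕ) : ℝ :=
  energyPerSite J (2*h) (stripeConfig h)

/-- The periodic checkerboard configuration `σ_c(h₁,h₂)(x) = (−1)^{⌊x₁/h₁⌋+⌊x₂/h₂⌋}`. -/
noncomputable def checkConfig (h₁ h₂ : ℕ) : SpinConfig :=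
  fun x => (-1 : ℝ) ^ (Int.fdiv x.1 (h₁:ℤ) + Int.fdiv x.2 (h₂:ℤ))

/-- `E(h₁,h₂)`, the energy per site of the checkerboard configuration. -/
noncomputable def checkEnergy (J : ℝ) (h₁ h₂ : ℕ) : ℝ :=
  energyPerSite J (2*h₁*h₂) (checkConfig h₁ h₂)

/-- The modified Bessel function `K₁(x) = (1/(2x)) ∫ e^{ixt} (t²+1)^{−3/2} dt`. -/
noncomputable def K1 (x : ℝ) : ℝ :=
  (1/(2*x)) * (∫ t : ℝ, Complex.exp (Complex.I * (x:ℂ) * (t:ℂ)) / ((t:ℂ)^2 + 1) ^ ((3:ℂ)/2)).re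

/-- `α_s = 2(1 + γ − log(π/2) + 4π Σ_{j,n ≥ 1} j K₁(2πjn))`. -/
noncomputable def alphaS : ℝ :=
  2 * (1 + Real.eulerMascheroniConstant - Real.log (Real.pi / 2)
    + 4 * Real.pi * ∑' (j : ℕ+) (n : ℕ+), (j : ℝ) * K1 (2 * Real.pi * j * n))

/-- `h*` is the unique minimizer of `h ↦ E_s(h)` over the positive integers. -/
def IsUniqueMinimizer (J : ℝ) (hstar : ℕ) : Prop :=
  0 < hstar ∧ ∀ h : ℕ, 0 < h → h ≠ hstar → stripeEnergy J hstar < stripeEnergy J h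

/-- `c_I = (2/(π√e)) e^{−α_s/2}`. -/
noncomputable def cI : ℝ := (2 / (Real.pi * Real.sqrt (Real.exp 1))) * Real.exp (-alphaS/2)

/-- `c_II(δ) = (129/(9π)) e^{−α_s/2 + 4δ}`. -/
noncomputable def cII (δ : ℝ) : ℝ := (129 / (9 * Real.pi)) * Real.exp (-alphaS/2 + 4*δ)

/-- `c_III(δ) = (2/π) e^{2 − α_s/2 − δ/4 − δ²}`. -/
noncomputable def cIII (δ : ℝ) : ℝ := (2 / Real.pi) * Real.exp (2 - alphaS/2 - δ/4 - δ^2)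

/-- The function appearing in the final lower bound of Lemma 4 of the paper. -/
noncomputable def phiFun (l : ℝ) : ℝ :=
  (2 - Real.log (27/16)) * l + (Real.log (27/16) - 1/3) * l^2 - (5/3) * l^3
    + l^2 * Real.log l + (1 - l) * Real.log (1 - l)


/-- For `0 < u ≤ 1`, `u - 1/u ≤ 2 log u`. -/
lemma keyA {u : ℝ} (hu : 0 < u) (hu1 : u ≤ 1) : u - 1/u ≤ 2 * Real.log u := by
  rcases eq_or_lt_of_le hu1 with h | h
  · subst h; simp
  · have ht : (0:ℝ) < -Real.log u := by
      have := Real.log_neg hu h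
      linarith
    have hs : -Real.log u < Real.sinh (-Real.log u) := Real.self_lt_sinh_iff.mpr ht
    rw [Real.sinh_eq, Real.exp_neg, neg_neg, Real.exp_log hu] at hs
    rw [inv_eq_one_div] at hs
    linarith

lemma log98_ub : Real.log (9/8) ≤ 17/144 := by
  have h := keyA (u := 8/9) (by norm_num) (by norm_num)
  rw [show ((8:ℝ)/9) = (9/8)⁻¹ by norm_num, Real.log_inv] at h
  norm_num at h ⊢
  linarith

lemma exp_217 : Real.exp (2/17) ≤ 9/8 := by
  have h := Real.exp_bound' (x := 2/17) (by norm_num) (by norm_num) (n := 4) (by norm_num)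
  refine h.trans ?_
  simp [Finset.sum_range_succ]
  norm_num [Nat.factorial]

lemma log98_lb : (2/17 : ℝ) ≤ Real.log (9/8) := by
  rw [Real.le_log_iff_exp_le (by norm_num)]
  exact exp_217

lemma log2716_eq : Real.log (27/16) = (1/2) * Real.log 2 + (3/2) * Real.log (9/8) := by
  have h2 : (2:ℝ) * Real.log (27/16) = Real.log 2 + 3 * Real.log (9/8) := by
    have e1 : ((27:ℝ)/16)^2 = 2 * (9/8)^3 := by norm_num
    calc (2:ℝ) * Real.log (27/16) = Real.log (((27:ℝ)/16)^2) := by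
          rw [Real.log_pow]; push_cast; ring
      _ = Real.log (2 * ((9:ℝ)/8)^3) := by rw [e1]
      _ = Real.log 2 + 3 * Real.log (9/8) := by
          rw [Real.log_mul (by norm_num) (by positivity), Real.log_pow]; push_cast; ring
  linarith

lemma c_bounds : (0.52 : ℝ) ≤ Real.log (27/16) ∧ Real.log (27/16) ≤ (0.53:ℝ) := by
  have hub := log98_ub
  have hlb := log98_lb
  have h2u := Real.log_two_lt_d9
  have h2l := Real.log_two_gt_d9
  rw [log2716_eq]
  constructor <;> nlinarith

lemma E_bound : Real.exp (-1) ≤ 0.368 := by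
  rw [Real.exp_neg]
  have h := Real.exp_one_gt_d9
  rw [inv_le_comm₀ (by positivity) (by norm_num)]
  linarith

/-- `φ(λ) > 0` on `(0,1/2]` and `φ(λ) → 0` as `λ → 0⁺`. -/
theorem phiFun_pos_and_tendsto_zero :
    (∀ l : ℝ, 0 < l → l ≤ 1/2 → phiFun l > 0) ∧
    Filter.Tendsto phiFun (nhdsWithin 0 (Set.Ioi 0)) (nhds 0) := by
  constructor
  · intro l hl hl2
    have hc := c_bounds
    have hE := E_bound
    have hEpos : 0 < Real.exp (-1) := Real.exp_pos _
    have h1 : l^2 * Real.log l ≥ -(Real.exp (-1)) * l := by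
      have h := Real.add_one_le_exp (-Real.log l - 1)
      have he : Real.exp (-Real.log l - 1) = l⁻¹ * Real.exp (-1) := by
        rw [sub_eq_add_neg, Real.exp_add, Real.exp_neg, Real.exp_log hl]
      rw [he] at h
      have h1' : l^2 * (-Real.log l - 1 + 1) ≤ l^2 * (l⁻¹ * Real.exp (-1)) :=
        mul_le_mul_of_nonneg_left h (sq_nonneg l)
      have hE2 : l^2 * (l⁻¹ * Real.exp (-1)) = l * Real.exp (-1) := by
        field_simp
      rw [hE2] at h1'
      nlinarith [h1']
    have h2 : (1 - l) * Real.log (1 - l) ≥ -l + l^2/2 := by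
      have hu : 0 < 1 - l := by linarith
      have h := keyA hu (by linarith)
      have hinv : (1 - l) * (1/(1 - l)) = 1 := mul_one_div_cancel hu.ne'
      nlinarith [mul_pos hu hu]
    unfold phiFun
    nlinarith [mul_pos hl hl, mul_nonneg (by linarith : (0:ℝ) ≤ 1/2 - l) hl.le,
      mul_nonneg (mul_nonneg (by linarith : (0:ℝ) ≤ 1/2 - l) hl.le) hl.le,
      hc.1, hc.2, mul_nonneg hEpos.le hl.le]
  · have hpoly : Filter.Tendsto (fun l : ℝ => (2 - Real.log (27/16)) * l
        + (Real.log (27/16) - 1/3) * l^2 - (5/3)*l^3 + (1 - l) * Real.log (1 - l))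
        (nhdsWithin 0 (Set.Ioi 0)) (nhds 0) := by
      have hcont : ContinuousAt (fun l : ℝ => (2 - Real.log (27/16)) * l
          + (Real.log (27/16) - 1/3) * l^2 - (5/3)*l^3 + (1 - l) * Real.log (1 - l)) 0 := by
        have hlog : ContinuousAt (fun l : ℝ => Real.log (1 - l)) 0 :=
          (Real.continuousAt_log (by norm_num)).comp (by fun_prop)
        fun_prop
      have h2 := hcont.tendsto.mono_left (nhdsWithin_le_nhds (s := Set.Ioi (0:ℝ)))
      simpa using h2
    have hmul : Filter.Tendsto (fun l : ℝ => l^2 * Real.log l)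
        (nhdsWithin 0 (Set.Ioi 0)) (nhds 0) := by
      have h := tendsto_log_mul_rpow_nhdsGT_zero (r := 2) (by norm_num)
      apply h.congr'
      filter_upwards [self_mem_nhdsWithin] with x hx
      rw [show ((2:ℝ)) = ((2:ℕ):ℝ) by norm_num, Real.rpow_natCast]
      ring
    have hsum := hpoly.add hmul
    rw [show ((0:ℝ) + 0 = 0) by norm_num] at hsum
    exact hsum.congr (fun l => by unfold phiFun; ring)
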